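/- (Eq. (47): cost-induced lower bound on τ) Suppose 0 < x < p_g ≤ 1. Then every τ > 0 satisfying c(τ) ≥ √(2π·p_g/x) also satisfies τ ≥ (1/(2·h_tot))·√(N_T·(1 − x/p_g)). -/

import Mathlib

private lemma exp18_lt_two : Real.exp (1/8 : ℝ) < 2 := by
  have h8 : Real.exp (1/8 : ℝ) ^ 8 = Real.exp 1 := by
    rw [← Real.exp_nat_mul]; norm_num
  have he : Real.exp 1 < 2.7182818286 := Real.exp_one_lt_d9
  have : Real.exp (1/8 : ℝ) ^ 8 < 2 ^ 8 := by
    rw [h8]; norm_num at he ⊢; linarith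
  exact lt_of_pow_lt_pow_left₀ 8 (by norm_num) this


private lemma key (t : ℝ) (ht : 0 ≤ t) : 2 * Real.exp t - 1 - 2 * t ≤ Real.exp (2 * t ^ 2) := by
  set g : ℝ → ℝ := fun s => Real.exp (2 * s ^ 2) + 1 + 2 * s - 2 * Real.exp s with hg
  have hd : ∀ s : ℝ, HasDerivAt g (4 * s * Real.exp (2 * s ^ 2) + 2 - 2 * Real.exp s) s := by
    intro s
    have h1 : HasDerivAt (fun s : ℝ => 2 * s ^ 2) (4 * s) s := by
      have := (hasDerivAt_pow 2 s).const_mul (2 : ℝ)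
      exact this.congr_deriv (by norm_num; ring)
    have h2 := h1.exp
    have h3 := (Real.hasDerivAt_exp s).const_mul (2 : ℝ)
    have h4 := ((h2.add_const 1).add ((hasDerivAt_id s).const_mul 2)).sub h3
    exact h4.congr_deriv (by ring)
  have hderiv : ∀ s : ℝ, 0 ≤ s → 0 ≤ 4 * s * Real.exp (2 * s ^ 2) + 2 - 2 * Real.exp s := by
    intro s hs
    have hA : (1 - s) * Real.exp s ≤ 1 := by
      have h := Real.add_one_le_exp (-s)
      have h' := mul_le_mul_of_nonneg_right h (Real.exp_pos s).le
      rw [← Real.exp_add] at h'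
      simp at h'
      nlinarith [Real.exp_pos s]
    have hB : Real.exp s ≤ 2 * Real.exp (2 * s ^ 2) := by
      have h1 : s - 2 * s ^ 2 ≤ 1/8 := by nlinarith [sq_nonneg (s - 1/4)]
      have h2 : Real.exp (s - 2 * s ^ 2) ≤ Real.exp (1/8 : ℝ) := Real.exp_le_exp.mpr h1
      have h3 : Real.exp s = Real.exp (s - 2 * s ^ 2) * Real.exp (2 * s ^ 2) := by
        rw [← Real.exp_add]; ring_nf
      rw [h3]
      have := exp18_lt_two
      nlinarith [Real.exp_pos (2 * s ^ 2)]
    nlinarith [Real.exp_pos s, Real.exp_pos (2 * s ^ 2), mul_le_mul_of_nonneg_left hB hs]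
  have hcont : ContinuousOn g (Set.Ici 0) := (fun s _ => (hd s).continuousAt.continuousWithinAt)
  have hmono : MonotoneOn g (Set.Ici 0) := by
    apply monotoneOn_of_deriv_nonneg (convex_Ici 0) hcont
    · intro s hs
      exact (hd s).differentiableAt.differentiableWithinAt
    · intro s hs
      rw [(hd s).deriv]
      exact hderiv s (le_of_lt (by simpa using hs))
  have h0 : g 0 = 0 := by simp [hg]; norm_num
  have := hmono (Set.self_mem_Ici) (Set.mem_Ici.mpr ht) ht
  rw [h0] at this
  simp only [hg] at this
  linarith

/-- (Eq. (47): cost-induced lower bound on `τ`) Let `h_tot > 0`, `N_T` a positive integer,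
and `0 < x < p_g ≤ 1`. Then every `τ > 0` satisfying `c(τ) ≥ √(2π·p_g/x)` also satisfies
`τ ≥ (1/(2·h_tot))·√(N_T·(1 − x/p_g))`, where
`c(τ) = ∫ e^{−u²/2}·(2·e^{(h_tot·τ/N_T)·|u|} − 1 − 2·(h_tot·τ/N_T)·|u|)^{N_T} du`. -/
theorem stmt15 (h_tot : ℝ) (hh : 0 < h_tot) (NT : ℕ) (hNT : 0 < NT)
    (x p_g : ℝ) (hx : 0 < x) (hxp : x < p_g) (hpg : p_g ≤ 1)
    (τ : ℝ) (hτ : 0 < τ)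
    (hc : Real.sqrt (2 * Real.pi * p_g / x) ≤
      ∫ u : ℝ, Real.exp (-u ^ 2 / 2) *
        (2 * Real.exp (h_tot * τ / NT * |u|) - 1 - 2 * (h_tot * τ / NT * |u|)) ^ NT) :
    1 / (2 * h_tot) * Real.sqrt (NT * (1 - x / p_g)) ≤ τ := by
  have hNT' : (0:ℝ) < NT := Nat.cast_pos.mpr hNT
  have hpg0 : 0 < p_g := lt_trans hx hxp
  set a : ℝ := h_tot * τ / NT with ha
  have hapos : 0 < a := by positivity
  have key2 : 1 - x / p_g ≤ 4 * NT * a ^ 2 := by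
    by_contra hcon
    push_neg at hcon
    set b : ℝ := 1 - 4 * NT * a ^ 2 with hb
    clear_value b
    have hxpg : 0 < x / p_g := div_pos hx hpg0
    have hbx : x / p_g < b := by simp only [hb]; linarith
    have hbpos : 0 < b := lt_trans hxpg hbx
    have hpt : ∀ u : ℝ, Real.exp (-u ^ 2 / 2) *
        (2 * Real.exp (a * |u|) - 1 - 2 * (a * |u|)) ^ NT ≤ Real.exp (-(b/2) * u ^ 2) := by
      intro u
      have ht : 0 ≤ a * |u| := mul_nonneg hapos.le (abs_nonneg u)
      have h1 := key (a * |u|) ht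
      have h0 : (0:ℝ) ≤ 2 * Real.exp (a * |u|) - 1 - 2 * (a * |u|) := by
        nlinarith [Real.add_one_le_exp (a * |u|)]
      have h2 : (2 * Real.exp (a * |u|) - 1 - 2 * (a * |u|)) ^ NT
          ≤ Real.exp (2 * (a * |u|) ^ 2) ^ NT := pow_le_pow_left₀ h0 h1 NT
      have h3 : Real.exp (2 * (a * |u|) ^ 2) ^ NT = Real.exp (2 * NT * a ^ 2 * u ^ 2) := by
        rw [← Real.exp_nat_mul]
        congr 1
        have : (a * |u|) ^ 2 = a ^ 2 * u ^ 2 := by rw [mul_pow, sq_abs]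
        rw [this]; ring
      calc Real.exp (-u ^ 2 / 2) * (2 * Real.exp (a * |u|) - 1 - 2 * (a * |u|)) ^ NT
          ≤ Real.exp (-u ^ 2 / 2) * Real.exp (2 * NT * a ^ 2 * u ^ 2) := by
            rw [← h3]; exact mul_le_mul_of_nonneg_left h2 (Real.exp_pos _).le
        _ = Real.exp (-(b/2) * u ^ 2) := by
            rw [← Real.exp_add]; congr 1; simp only [hb]; ring
    have hint : MeasureTheory.Integrable (fun u : ℝ => Real.exp (-(b/2) * u ^ 2)) := by
      simpa using integrable_exp_neg_mul_sq (by positivity : (0:ℝ) < b/2)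
    have hnn : ∀ u : ℝ, 0 ≤ Real.exp (-u ^ 2 / 2) *
        (2 * Real.exp (a * |u|) - 1 - 2 * (a * |u|)) ^ NT := by
      intro u
      have h0 : (0:ℝ) ≤ 2 * Real.exp (a * |u|) - 1 - 2 * (a * |u|) := by
        nlinarith [Real.add_one_le_exp (a * |u|)]
      positivity
    have hmono := MeasureTheory.integral_mono_of_nonneg
      (f := fun u : ℝ => Real.exp (-u ^ 2 / 2) *
        (2 * Real.exp (a * |u|) - 1 - 2 * (a * |u|)) ^ NT)
      (g := fun u : ℝ => Real.exp (-(b/2) * u ^ 2))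
      (Filter.Eventually.of_forall hnn) hint (Filter.Eventually.of_forall hpt)
    have hval : (∫ u : ℝ, Real.exp (-(b/2) * u ^ 2)) = Real.sqrt (Real.pi / (b/2)) :=
      integral_gaussian (b/2)
    have hlt : Real.sqrt (Real.pi / (b/2)) < Real.sqrt (2 * Real.pi * p_g / x) := by
      apply Real.sqrt_lt_sqrt (by positivity)
      rw [div_lt_div_iff₀ (by positivity) hx]
      have hpb : x < p_g * b := (div_lt_iff₀ hpg0).mp hbx |>.trans_eq (mul_comm b p_g)
      nlinarith [mul_lt_mul_of_pos_left hpb Real.pi_pos]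
    rw [hval] at hmono
    linarith
  have haNT : a * NT = h_tot * τ := by rw [ha]; field_simp
  have hsq : NT * (1 - x / p_g) ≤ (2 * h_tot * τ) ^ 2 := by
    have h1 := mul_le_mul_of_nonneg_left key2 hNT'.le
    have h2 : (a * (NT:ℝ)) ^ 2 = (h_tot * τ) ^ 2 := by rw [haNT]
    nlinarith [h1, h2]
  have hS : Real.sqrt (NT * (1 - x / p_g)) ≤ 2 * h_tot * τ := by
    calc Real.sqrt (NT * (1 - x / p_g)) ≤ Real.sqrt ((2 * h_tot * τ) ^ 2) :=
          Real.sqrt_le_sqrt hsq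
      _ = 2 * h_tot * τ := Real.sqrt_sq (by positivity)
  rw [div_mul_eq_mul_div, div_le_iff₀ (by positivity : (0:ℝ) < 2 * h_tot)]
  linarith
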